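/- For complex numbers A, a_1, a_2, X with A ≠ 1, a_1 ≠ a_2, and |A a_1 X| < 1, |A a_2 X| < 1, |A^{-1} a_1 X| < 1, |A^{-1} a_2 X| < 1, the series Σ_{k=1}^∞ ((A^{k+1} - A^{-k})/(A-1)) · ((a_1^{k} - a_2^{k})/(a_1 - a_2)) · a_1 a_2 · X^{k+1} converges and equals (((A^2+A+1)/A) a_1 a_2 X^2 - a_1 a_2 (a_1+a_2) X^3 - a_1^2 a_2^2 X^4) / ((1-A a_1 X)(1-A a_2 X)(1-A^{-1} a_1 X)(1-A^{-1} a_2 X)). -/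

import Mathlib

set_option maxHeartbeats 1000000 in
theorem second_sum_unramified (A a₁ a₂ X : ℂ) (hA0 : A ≠ 0) (ha10 : a₁ ≠ 0) (ha20 : a₂ ≠ 0)
    (hX0 : X ≠ 0) (hA : A ≠ 1) (ha : a₁ ≠ a₂)
    (h1 : ‖A * a₁ * X‖ < 1) (h2 : ‖A * a₂ * X‖ < 1)
    (h3 : ‖A⁻¹ * a₁ * X‖ < 1) (h4 : ‖A⁻¹ * a₂ * X‖ < 1) :
    HasSum (fun k : ℕ =>
        ((A ^ (k + 1 + 1) - A ^ (-((k : ℤ) + 1))) / (A - 1))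
          * ((a₁ ^ (k + 1) - a₂ ^ (k + 1)) / (a₁ - a₂)) * (a₁ * a₂) * X ^ (k + 1 + 1))
      ((((A ^ 2 + A + 1) / A) * a₁ * a₂ * X ^ 2 - a₁ * a₂ * (a₁ + a₂) * X ^ 3
          - a₁ ^ 2 * a₂ ^ 2 * X ^ 4)
        / ((1 - A * a₁ * X) * (1 - A * a₂ * X) * (1 - A⁻¹ * a₁ * X) * (1 - A⁻¹ * a₂ * X))) := by
  have hA1 : A - 1 ≠ 0 := sub_ne_zero.mpr hA
  have ha12 : a₁ - a₂ ≠ 0 := sub_ne_zero.mpr ha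
  have n1 : (1 : ℂ) - A * a₁ * X ≠ 0 := by
    intro h; rw [sub_eq_zero] at h; rw [← h] at h1; simp at h1
  have n2 : (1 : ℂ) - A * a₂ * X ≠ 0 := by
    intro h; rw [sub_eq_zero] at h; rw [← h] at h2; simp at h2
  have n3 : (1 : ℂ) - A⁻¹ * a₁ * X ≠ 0 := by
    intro h; rw [sub_eq_zero] at h; rw [← h] at h3; simp at h3
  have n4 : (1 : ℂ) - A⁻¹ * a₂ * X ≠ 0 := by
    intro h; rw [sub_eq_zero] at h; rw [← h] at h4; simp at h4
  have geo : ∀ r : ℂ, ‖r‖ < 1 → ∀ c : ℂ,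
      HasSum (fun k : ℕ => c * r ^ (k + 1)) (c * (r * (1 - r)⁻¹)) := by
    intro r hr c
    have h := (hasSum_geometric_of_norm_lt_one (ξ := r) (by simpa using hr)).mul_left r
    simpa [pow_succ, mul_comm] using h.mul_left c
  have g1 := geo (A * a₁ * X) h1 ((a₁*a₂/((A-1)*(a₁-a₂))) * X * A)
  have g2 := geo (A * a₂ * X) h2 ((a₁*a₂/((A-1)*(a₁-a₂))) * X * A)
  have g3 := geo (A⁻¹ * a₁ * X) h3 ((a₁*a₂/((A-1)*(a₁-a₂))) * X)
  have g4 := geo (A⁻¹ * a₂ * X) h4 ((a₁*a₂/((A-1)*(a₁-a₂))) * X)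
  have key := ((g1.sub g2).sub g3).add g4
  convert key using 1
  · rfl
  · funext k
    have hzA : A ^ (-((k : ℤ) + 1)) = (A⁻¹) ^ (k + 1) := by
      rw [show -((k : ℤ) + 1) = -((k + 1 : ℕ) : ℤ) by push_cast; ring, zpow_neg, zpow_natCast,
        inv_pow]
    rw [hzA]
    simp only [div_eq_mul_inv, mul_inv]
    ring
  · have e1 : (1:ℂ) - A⁻¹*a₁*X = (A - a₁*X)/A := by field_simp
    have e2 : (1:ℂ) - A⁻¹*a₂*X = (A - a₂*X)/A := by field_simp
    have m1 : A - a₁*X ≠ 0 := by intro h; rw [e1, h] at n3; simp at n3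
    have m2 : A - a₂*X ≠ 0 := by intro h; rw [e2, h] at n4; simp at n4
    have f1 : (A⁻¹*a₁*X) * ((1:ℂ) - A⁻¹*a₁*X)⁻¹ = (a₁*X) * (A - a₁*X)⁻¹ := by
      rw [e1]; field_simp
    have f2 : (A⁻¹*a₂*X) * ((1:ℂ) - A⁻¹*a₂*X)⁻¹ = (a₂*X) * (A - a₂*X)⁻¹ := by
      rw [e2]; field_simp
    rw [f1, f2, e1, e2]
    have hden : (1 - A*a₁*X) * (1 - A*a₂*X) * ((A - a₁*X)/A) * ((A - a₂*X)/A)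
        = ((1 - A*a₁*X) * (1 - A*a₂*X) * (A - a₁*X) * (A - a₂*X)) / (A^2) := by
      ring
    have hW : (a₁*a₂/((A-1)*(a₁-a₂))) * X * A * ((A*a₁*X) * (1 - A*a₁*X)⁻¹)
        - (a₁*a₂/((A-1)*(a₁-a₂))) * X * A * ((A*a₂*X) * (1 - A*a₂*X)⁻¹)
        - (a₁*a₂/((A-1)*(a₁-a₂))) * X * ((a₁*X) * (A - a₁*X)⁻¹)
        + (a₁*a₂/((A-1)*(a₁-a₂))) * X * ((a₂*X) * (A - a₂*X)⁻¹)
        = ((a₁*a₂*X*A*(A*a₁*X))/(1 - A*a₁*X) - (a₁*a₂*X*A*(A*a₂*X))/(1 - A*a₂*X)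
            - (a₁*a₂*X*(a₁*X))/(A - a₁*X) + (a₁*a₂*X*(a₂*X))/(A - a₂*X))
          / ((A-1)*(a₁-a₂)) := by
      ring
    have hnum : (((A^2+A+1)/A) * a₁ * a₂ * X^2 - a₁*a₂*(a₁+a₂)*X^3 - a₁^2*a₂^2*X^4) * A^2
        = (A^2+A+1) * A * a₁ * a₂ * X^2 - a₁*a₂*(a₁+a₂)*X^3*A^2 - a₁^2*a₂^2*X^4*A^2 := by
      field_simp
    rw [hden, div_div_eq_mul_div, hnum, hW,
      div_sub_div _ _ n1 n2, div_sub_div _ _ (mul_ne_zero n1 n2) m1,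
      div_add_div _ _ (mul_ne_zero (mul_ne_zero n1 n2) m1) m2, div_div,
      div_eq_div_iff
        (mul_ne_zero (mul_ne_zero (mul_ne_zero n1 n2) m1) m2)
        (mul_ne_zero (mul_ne_zero (mul_ne_zero (mul_ne_zero n1 n2) m1) m2)
          (mul_ne_zero hA1 ha12))]
    ring
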